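/- arXiv:1107.1571 — 4 statements merged into one kernel-verified Lean document; each statement's English description precedes it below -/
import Mathlib

section
/- There is a constant c > 0, depending only on n and Δ, such that for every integer m ≥ 2 the Lebesgue outer measure of [0,1] ∖ 𝒜_m is at most c·m^{1+2Δ−n}. -/
open Filter Finset MeasureTheory

/-- An approximant to a real number `t`: a reduced fraction `u/q` with `q ≥ 1`
and `|t - u/q| < 1/q²`. -/
def IsApproximant (t : ℝ) (u q : ℤ) : Prop :=
  1 ≤ q ∧ Int.gcd u q = 1 ∧ |t - (u : ℝ) / (q : ℝ)| < 1 / (q : ℝ) ^ 2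

/-- The set `𝒜_m`: `t ∈ [0,1]` such that for every real `M ≥ m` there is an
approximant `u/q` to `t` with `M^Δ < q ≤ M^(n-Δ)`. -/
def Aset (n : ℕ) (Δ : ℝ) (m : ℤ) : Set ℝ :=
  {t | t ∈ Set.Icc (0 : ℝ) 1 ∧ ∀ M : ℝ, (m : ℝ) ≤ M →
    ∃ u q : ℤ, IsApproximant t u q ∧ M ^ Δ < (q : ℝ) ∧ (q : ℝ) ≤ M ^ ((n : ℝ) - Δ)}

/-- The set `𝒜`: `t ∈ [0,1]` such that for all sufficiently large `M` there is an
approximant `u/q` to `t` with `M^Δ < q ≤ M^(n-Δ)`. -/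
def Aall (n : ℕ) (Δ : ℝ) : Set ℝ :=
  {t | t ∈ Set.Icc (0 : ℝ) 1 ∧ ∃ M₀ : ℝ, ∀ M : ℝ, M₀ ≤ M →
    ∃ u q : ℤ, IsApproximant t u q ∧ M ^ Δ < (q : ℝ) ∧ (q : ℝ) ≤ M ^ ((n : ℝ) - Δ)}

/-- The set `ℬ_{m,α}`: `t ∈ (0,1]` such that for every real `M ≥ m·t^(-α)` there is an
approximant `u/q` to `t` with `M^Δ < q ≤ M^(n-Δ)`. -/
def Bset (n : ℕ) (Δ : ℝ) (m : ℤ) (α : ℝ) : Set ℝ :=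
  {t | t ∈ Set.Ioc (0 : ℝ) 1 ∧ ∀ M : ℝ, (m : ℝ) * t ^ (-α) ≤ M →
    ∃ u q : ℤ, IsApproximant t u q ∧ M ^ Δ < (q : ℝ) ∧ (q : ℝ) ≤ M ^ ((n : ℝ) - Δ)}

section AuxStmt2
open ENNReal

lemma dirichlet_approx (t : ℝ) (N : ℕ) (hN : 0 < N) :
    ∃ u q : ℤ, IsApproximant t u q ∧ (q : ℝ) ≤ N ∧
      |t - (u : ℝ) / q| ≤ 1 / ((q : ℝ) * (N + 1)) := by
  obtain ⟨j, k, hk0, hkN, hjk⟩ := Real.exists_int_int_abs_mul_sub_le t hN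
  have hg0 : 0 < Int.gcd j k := Int.gcd_pos_of_ne_zero_right j hk0.ne'
  set g : ℤ := (Int.gcd j k : ℤ) with hg
  have hg0' : (0:ℤ) < g := by rw [hg]; exact_mod_cast hg0
  set u : ℤ := j / g with hu
  set q : ℤ := k / g with hq
  have hdk : g ∣ k := Int.gcd_dvd_right j k
  have hdj : g ∣ j := Int.gcd_dvd_left j k
  have hk : g * q = k := Int.mul_ediv_cancel' hdk
  have hj : g * u = j := Int.mul_ediv_cancel' hdj
  have hq0 : 0 < q := by
    rcases lt_trichotomy q 0 with h | h | h
    · nlinarith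
    · rw [← hk, h, mul_zero] at hk0; omega
    · exact h
  have hq1 : 1 ≤ q := hq0
  have hqk : q ≤ k := by nlinarith
  have hcop : Int.gcd u q = 1 := Int.gcd_div_gcd_div_gcd hg0
  -- real facts
  have hkR : (0:ℝ) < (k:ℝ) := by exact_mod_cast hk0
  have hqR : (0:ℝ) < (q:ℝ) := by exact_mod_cast hq0
  have hfrac : (u:ℝ) / q = (j:ℝ) / k := by
    rw [div_eq_div_iff hqR.ne' hkR.ne']
    push_cast [← hk, ← hj]
    ring
  have habs : |t - (u:ℝ)/q| = |(k:ℝ) * t - j| / k := by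
    rw [hfrac]
    rw [show t - (j:ℝ)/k = ((k:ℝ)*t - j)/k from by field_simp]
    rw [abs_div, abs_of_pos hkR]
  have hNR : (0:ℝ) < (N:ℝ) + 1 := by positivity
  have hkNle : (k:ℝ) ≤ (N:ℝ) := by exact_mod_cast hkN
  have hqNle : (q:ℝ) ≤ (N:ℝ) := le_trans (by exact_mod_cast hqk) hkNle
  have hmain : |t - (u:ℝ)/q| ≤ 1 / ((q:ℝ) * (N + 1)) := by
    rw [habs, div_le_div_iff₀ hkR (by positivity)]
    have hqkR : (q:ℝ) ≤ (k:ℝ) := by exact_mod_cast hqk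
    calc |(k:ℝ) * t - j| * ((q:ℝ) * (N+1)) ≤ (1/((N:ℝ)+1)) * ((q:ℝ)*(N+1)) := by
          apply mul_le_mul_of_nonneg_right hjk (by positivity)
      _ = (q:ℝ) := by field_simp
      _ ≤ 1 * k := by rw [one_mul]; exact hqkR
  refine ⟨u, q, ⟨hq1, hcop, ?_⟩, hqNle, hmain⟩
  refine lt_of_le_of_lt hmain ?_
  rw [div_lt_div_iff₀ (by positivity) (by positivity)]
  have h1q : (1:ℝ) ≤ (q:ℝ) := by exact_mod_cast hq1
  nlinarith

/-- the covering bad set -/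
def badE (Δ ν L U : ℝ) : Set ℝ :=
  ⋃ q ∈ Finset.Icc (1:ℤ) ⌈U ^ Δ⌉, ⋃ u ∈ Finset.Icc (-q) (2*q),
    Metric.closedBall ((u:ℝ)/q) (1/((q:ℝ) * L ^ (ν - Δ)))

lemma cover_point (Δ ν L U M t : ℝ) (hΔ0 : 0 < Δ) (hν : 1 + Δ ≤ ν)
    (hL : 2 ≤ L) (hLM : L ≤ M) (hMU : M ≤ U) (ht : t ∈ Set.Icc (0:ℝ) 1)
    (hfail : ¬∃ u q : ℤ, IsApproximant t u q ∧ M ^ Δ < (q : ℝ) ∧ (q : ℝ) ≤ M ^ (ν - Δ)) :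
    t ∈ badE Δ ν L U := by
  push_neg at hfail
  have hM2 : (2:ℝ) ≤ M := le_trans hL hLM
  have hM1 : (1:ℝ) ≤ M := by linarith
  have hM0 : (0:ℝ) < M := by linarith
  have hνΔ : 1 ≤ ν - Δ := by linarith
  have hMν2 : (2:ℝ) ≤ M ^ (ν - Δ) := by
    calc (2:ℝ) ≤ M := hM2
    _ = M ^ (1:ℝ) := (Real.rpow_one M).symm
    _ ≤ M ^ (ν - Δ) := Real.rpow_le_rpow_of_exponent_le hM1 hνΔ
  set N : ℕ := ⌊M ^ (ν - Δ)⌋₊ with hN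
  have hN1 : 1 ≤ N := Nat.le_floor (by push_cast; linarith)
  obtain ⟨u, q, happ, hqN, hclose⟩ := dirichlet_approx t N (by omega)
  have hq1 : 1 ≤ q := happ.1
  have hqR : (0:ℝ) < (q:ℝ) := by exact_mod_cast hq1
  have hqMν : (q:ℝ) ≤ M ^ (ν - Δ) := le_trans hqN (Nat.floor_le (by positivity))
  have hMνN : M ^ (ν - Δ) ≤ (N:ℝ) + 1 := le_of_lt (Nat.lt_floor_add_one _)
  -- from failure: q ≤ M^Δ
  have hqMΔ : (q:ℝ) ≤ M ^ Δ := by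
    by_contra hcon
    exact absurd hqMν (by simpa using (hfail u q happ (lt_of_not_ge hcon)))
  -- distance bound
  have hLν0 : (0:ℝ) < L ^ (ν - Δ) := Real.rpow_pos_of_pos (by linarith) _
  have hLMν : L ^ (ν - Δ) ≤ M ^ (ν - Δ) := Real.rpow_le_rpow (by linarith) hLM (by linarith)
  have hdist : |t - (u:ℝ)/q| ≤ 1/((q:ℝ) * L ^ (ν - Δ)) := by
    refine le_trans hclose ?_
    apply div_le_div_of_nonneg_left one_pos.le (by positivity)
    have : L ^ (ν - Δ) ≤ (N:ℝ) + 1 := le_trans hLMν hMνN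
    nlinarith
  -- u bounds
  have hL1 : 1 ≤ L ^ (ν - Δ) := by
    calc (1:ℝ) ≤ L := by linarith
    _ = L ^ (1:ℝ) := (Real.rpow_one L).symm
    _ ≤ L ^ (ν - Δ) := Real.rpow_le_rpow_of_exponent_le (by linarith) hνΔ
  have hdist1 : |t - (u:ℝ)/q| ≤ 1 := by
    refine le_trans hdist ?_
    rw [div_le_one (by positivity)]
    have hq1R : (1:ℝ) ≤ (q:ℝ) := by exact_mod_cast hq1
    calc (1:ℝ) = 1*1 := by ring
    _ ≤ (q:ℝ) * L ^ (ν - Δ) := mul_le_mul hq1R hL1 zero_le_one (by linarith)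
  have habs := abs_le.mp hdist1
  have huq_lb : (-1:ℝ) ≤ (u:ℝ)/q := by
    have := habs.2; have := ht.1; linarith
  have huq_ub : (u:ℝ)/q ≤ 2 := by
    have := habs.1; have := ht.2; linarith
  have hu_lb : -q ≤ u := by
    have : (-(q:ℝ)) ≤ (u:ℝ) := by
      rw [div_le_iff₀ hqR] at huq_ub
      rw [le_div_iff₀ hqR] at huq_lb
      linarith
    exact_mod_cast this
  have hu_ub : u ≤ 2*q := by
    have : (u:ℝ) ≤ 2*(q:ℝ) := by
      rw [div_le_iff₀ hqR] at huq_ub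
      linarith
    exact_mod_cast this
  -- q ≤ ⌈U^Δ⌉
  have hqQ : q ≤ ⌈U ^ Δ⌉ := by
    have hUΔ : M ^ Δ ≤ U ^ Δ := Real.rpow_le_rpow (by linarith) hMU hΔ0.le
    have : (q:ℝ) ≤ (⌈U ^ Δ⌉ : ℝ) := le_trans (le_trans hqMΔ hUΔ) (Int.le_ceil _)
    exact_mod_cast this
  -- membership
  simp only [badE, Set.mem_iUnion, Finset.mem_Icc]
  refine ⟨q, ⟨hq1, hqQ⟩, u, ⟨hu_lb, hu_ub⟩, ?_⟩
  rw [Metric.mem_closedBall, Real.dist_eq]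
  exact hdist

lemma badE_volume (Δ ν L U : ℝ) (hU1 : 1 ≤ U ^ Δ) (hL0 : 0 < L ^ (ν - Δ)) :
    volume (badE Δ ν L U) ≤ ENNReal.ofReal (16 * U ^ Δ / L ^ (ν - Δ)) := by
  set L' := L ^ (ν - Δ) with hL'
  set Q := ⌈U ^ Δ⌉ with hQdef
  have hQ1 : 1 ≤ Q := Int.ceil_pos.mpr (by linarith)
  have hQR : (Q:ℝ) ≤ 2 * U ^ Δ := by
    have h1 := Int.ceil_lt_add_one (U ^ Δ)
    linarith
  calc volume (badE Δ ν L U)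
      ≤ ∑ q ∈ Finset.Icc (1:ℤ) Q, volume (⋃ u ∈ Finset.Icc (-q) (2*q),
          Metric.closedBall ((u:ℝ)/q) (1/((q:ℝ) * L'))) :=
        measure_biUnion_finset_le _ _
    _ ≤ ∑ q ∈ Finset.Icc (1:ℤ) Q, ENNReal.ofReal (8 / L') := by
        apply Finset.sum_le_sum
        intro q hq
        obtain ⟨hq1, hqQ⟩ := Finset.mem_Icc.mp hq
        have hqR : (0:ℝ) < (q:ℝ) := by exact_mod_cast hq1
        have hq1R : (1:ℝ) ≤ (q:ℝ) := by exact_mod_cast hq1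
        calc volume (⋃ u ∈ Finset.Icc (-q) (2*q),
                Metric.closedBall ((u:ℝ)/q) (1/((q:ℝ) * L')))
            ≤ ∑ u ∈ Finset.Icc (-q) (2*q),
                volume (Metric.closedBall ((u:ℝ)/q) (1/((q:ℝ) * L'))) :=
              measure_biUnion_finset_le _ _
          _ = ∑ _u ∈ Finset.Icc (-q) (2*q), ENNReal.ofReal (2 * (1/((q:ℝ) * L'))) := by
              simp [Real.volume_closedBall]
          _ = ((3*q+1).toNat : ℝ≥0∞) * ENNReal.ofReal (2 * (1/((q:ℝ) * L'))) := by
              rw [Finset.sum_const, Int.card_Icc, nsmul_eq_mul]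
              norm_num
              congr 2
              omega
          _ = ENNReal.ofReal (((3*q+1).toNat : ℝ) * (2 * (1/((q:ℝ) * L')))) := by
              rw [← ENNReal.ofReal_natCast ((3*q+1).toNat), ← ENNReal.ofReal_mul (by positivity)]
          _ ≤ ENNReal.ofReal (8 / L') := by
              apply ENNReal.ofReal_le_ofReal
              have hcard : ((3*q+1).toNat : ℝ) = 3*(q:ℝ)+1 := by
                have : ((3*q+1).toNat : ℤ) = 3*q+1 := Int.toNat_of_nonneg (by omega)
                exact_mod_cast this
              rw [hcard, mul_one_div, mul_div_assoc', div_le_div_iff₀ (by positivity) hL0]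
              nlinarith [mul_nonneg (by linarith : (0:ℝ) ≤ (q:ℝ) - 1) hL0.le]
    _ = (Q.toNat : ℝ≥0∞) * ENNReal.ofReal (8 / L') := by
        rw [Finset.sum_const, Int.card_Icc, nsmul_eq_mul]
        congr 2
        omega
    _ = ENNReal.ofReal ((Q.toNat : ℝ) * (8 / L')) := by
        rw [← ENNReal.ofReal_natCast Q.toNat, ← ENNReal.ofReal_mul (by positivity)]
    _ ≤ ENNReal.ofReal (16 * U ^ Δ / L') := by
        apply ENNReal.ofReal_le_ofReal
        have : ((Q.toNat : ℝ)) = (Q:ℝ) := by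
          norm_cast
          omega
        rw [this, mul_div_assoc', div_le_div_iff₀ hL0 hL0]
        nlinarith

lemma alg (x Δ nr : ℝ) (hx : 1 ≤ x) (j : ℕ) :
    16 * (x * 2^(j+1)) ^ Δ / (x * 2^j) ^ (nr - Δ) =
    (16 * 2 ^ Δ) * x ^ (2*Δ - nr) * ((2:ℝ) ^ (2*Δ - nr)) ^ j := by
  have hx0 : (0:ℝ) < x := by linarith
  have h2 : (0:ℝ) < 2 := two_pos
  rw [← Real.rpow_natCast ((2:ℝ) ^ (2*Δ - nr)) j, ← Real.rpow_mul h2.le,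
      ← Real.rpow_natCast (2:ℝ) (j+1), ← Real.rpow_natCast (2:ℝ) j,
      Real.mul_rpow hx0.le (by positivity), Real.mul_rpow hx0.le (by positivity),
      ← Real.rpow_mul h2.le, ← Real.rpow_mul h2.le]
  push_cast
  rw [show ((j:ℝ)+1)*Δ = Δ + (j:ℝ)*Δ by ring, Real.rpow_add h2 Δ ((j:ℝ)*Δ),
      show 2*Δ - nr = Δ - (nr - Δ) by ring, Real.rpow_sub hx0 Δ (nr - Δ),
      show (Δ - (nr - Δ))*(j:ℝ) = (j:ℝ)*Δ - (j:ℝ)*(nr-Δ) by ring,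
      Real.rpow_sub h2 ((j:ℝ)*Δ) ((j:ℝ)*(nr-Δ))]
  have p1 : (0:ℝ) < x ^ (nr - Δ) := Real.rpow_pos_of_pos hx0 _
  have p2 : (0:ℝ) < (2:ℝ) ^ ((j:ℝ)*(nr - Δ)) := Real.rpow_pos_of_pos h2 _
  field_simp

end AuxStmt2

/-- there is `c > 0`, depending only on `n` and `Δ`, such that for every
integer `m ≥ 2` the Lebesgue (outer) measure of `[0,1] \ 𝒜_m` is at most `c·m^(1+2Δ-n)`. -/


theorem stmt2 (n : ℕ) (hn : 2 ≤ n) (Δ : ℝ) (hΔ0 : 0 < Δ) (hΔ1 : Δ < 1)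
    (hΔ2 : n = 2 → Δ < 1 / 2) :
    ∃ c : ℝ, 0 < c ∧ ∀ m : ℤ, 2 ≤ m →
      volume (Set.Icc (0 : ℝ) 1 \ Aset n Δ m) ≤
        ENNReal.ofReal (c * (m : ℝ) ^ (1 + 2 * Δ - (n : ℝ))) := by
  have hnR : (2:ℝ) ≤ (n:ℝ) := by exact_mod_cast hn
  set r : ℝ := (2:ℝ) ^ (2*Δ - (n:ℝ)) with hrdef
  have hr0 : 0 < r := Real.rpow_pos_of_pos two_pos _
  have hr1 : r < 1 := Real.rpow_lt_one_of_one_lt_of_neg one_lt_two (by linarith)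
  have hr1' : (0:ℝ) < 1 - r := by linarith
  refine ⟨16 * 2 ^ Δ * (1 - r)⁻¹, by positivity, ?_⟩
  intro m hm
  have hmR : (2:ℝ) ≤ (m:ℝ) := by exact_mod_cast hm
  have hm0 : (0:ℝ) < (m:ℝ) := by linarith
  have hm1 : (1:ℝ) ≤ (m:ℝ) := by linarith
  have hν : 1 + Δ ≤ (n:ℝ) := by linarith
  -- covering
  have hcover : Set.Icc (0:ℝ) 1 \ Aset n Δ m ⊆
      ⋃ j : ℕ, badE Δ (n:ℝ) ((m:ℝ)*2^j) ((m:ℝ)*2^(j+1)) := by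
    intro t ht
    obtain ⟨ht1, ht2⟩ := ht
    have ht2' : ¬(t ∈ Set.Icc (0:ℝ) 1 ∧ ∀ M : ℝ, (m : ℝ) ≤ M →
        ∃ u q : ℤ, IsApproximant t u q ∧ M ^ Δ < (q : ℝ) ∧ (q : ℝ) ≤ M ^ ((n : ℝ) - Δ)) := ht2
    push_neg at ht2'
    obtain ⟨M, hMm, hfail⟩ := ht2' ht1
    have hMm' : (1:ℝ) ≤ M / (m:ℝ) := (one_le_div hm0).mpr hMm
    set k : ℕ := ⌊M / (m:ℝ)⌋₊ with hkdef
    have hk1 : 1 ≤ k := Nat.le_floor (by push_cast; linarith)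
    set j : ℕ := Nat.log 2 k with hjdef
    have h2jk : 2^j ≤ k := Nat.pow_log_le_self 2 (by omega)
    have hk2j : k < 2^(j+1) := Nat.lt_pow_succ_log_self (by norm_num) k
    have hLM : (m:ℝ) * 2^j ≤ M := by
      have h1 : ((2:ℝ))^j ≤ (k:ℝ) := by exact_mod_cast h2jk
      have h2 : (k:ℝ) ≤ M / (m:ℝ) := Nat.floor_le (by linarith)
      calc (m:ℝ) * 2^j ≤ (m:ℝ) * (M / (m:ℝ)) :=
            mul_le_mul_of_nonneg_left (le_trans h1 h2) hm0.le
        _ = M := by field_simp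
    have hMU : M ≤ (m:ℝ) * 2^(j+1) := by
      have h1 : M / (m:ℝ) < (k:ℝ) + 1 := Nat.lt_floor_add_one _
      have h2 : (k:ℝ) + 1 ≤ (2:ℝ)^(j+1) := by
        have := Nat.succ_le_of_lt hk2j
        exact_mod_cast this
      calc M = (m:ℝ) * (M / (m:ℝ)) := by field_simp
        _ ≤ (m:ℝ) * 2^(j+1) := mul_le_mul_of_nonneg_left (by linarith) hm0.le
    have hL2 : (2:ℝ) ≤ (m:ℝ) * 2^j := by
      have h1 : (1:ℝ) ≤ (2:ℝ)^j := one_le_pow₀ (by norm_num)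
      nlinarith
    exact Set.mem_iUnion.mpr ⟨j, cover_point Δ (n:ℝ) _ _ M t hΔ0 hν hL2 hLM hMU ht1 (by push_neg; exact hfail)⟩
  -- measure estimate
  calc volume (Set.Icc (0:ℝ) 1 \ Aset n Δ m)
      ≤ volume (⋃ j : ℕ, badE Δ (n:ℝ) ((m:ℝ)*2^j) ((m:ℝ)*2^(j+1))) := measure_mono hcover
    _ ≤ ∑' j : ℕ, volume (badE Δ (n:ℝ) ((m:ℝ)*2^j) ((m:ℝ)*2^(j+1))) := measure_iUnion_le _
    _ ≤ ∑' j : ℕ, ENNReal.ofReal ((16 * 2 ^ Δ) * (m:ℝ) ^ (2*Δ - (n:ℝ)) * r ^ j) := by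
        apply ENNReal.tsum_le_tsum
        intro j
        have hU1 : 1 ≤ ((m:ℝ)*2^(j+1)) ^ Δ := by
          rw [show (1:ℝ) = 1 ^ Δ from (Real.one_rpow Δ).symm]
          apply Real.rpow_le_rpow zero_le_one ?_ hΔ0.le
          have h1 : (1:ℝ) ≤ (2:ℝ)^(j+1) := one_le_pow₀ (by norm_num)
          nlinarith
        have hL0 : (0:ℝ) < ((m:ℝ)*2^j) ^ ((n:ℝ) - Δ) := Real.rpow_pos_of_pos (by positivity) _
        refine le_trans (badE_volume Δ (n:ℝ) _ _ hU1 hL0) ?_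
        rw [show 16 * ((m:ℝ)*2^(j+1)) ^ Δ / ((m:ℝ)*2^j) ^ ((n:ℝ) - Δ)
            = (16 * 2 ^ Δ) * (m:ℝ) ^ (2*Δ - (n:ℝ)) * r ^ j from alg (m:ℝ) Δ (n:ℝ) hm1 j]
    _ = ENNReal.ofReal (∑' j : ℕ, (16 * 2 ^ Δ) * (m:ℝ) ^ (2*Δ - (n:ℝ)) * r ^ j) := by
        rw [ENNReal.ofReal_tsum_of_nonneg (fun j => by positivity)
          (((summable_geometric_of_lt_one hr0.le hr1).mul_left _))]
    _ = ENNReal.ofReal ((16 * 2 ^ Δ) * (m:ℝ) ^ (2*Δ - (n:ℝ)) * (1 - r)⁻¹) := by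
        rw [tsum_mul_left, tsum_geometric_of_lt_one hr0.le hr1]
    _ ≤ ENNReal.ofReal (16 * 2 ^ Δ * (1 - r)⁻¹ * (m:ℝ) ^ (1 + 2 * Δ - (n:ℝ))) := by
        apply ENNReal.ofReal_le_ofReal
        have hexp : (m:ℝ) ^ (2*Δ - (n:ℝ)) ≤ (m:ℝ) ^ (1 + 2*Δ - (n:ℝ)) :=
          Real.rpow_le_rpow_of_exponent_le hm1 (by linarith)
        have hpos : (0:ℝ) < (m:ℝ) ^ (2*Δ - (n:ℝ)) := Real.rpow_pos_of_pos hm0 _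
        nlinarith [Real.rpow_pos_of_pos hm0 (1 + 2*Δ - (n:ℝ)), mul_pos (by positivity : (0:ℝ) < 16*2^Δ) (inv_pos.mpr hr1')]
end

section
/- The set [0,1] ∖ 𝒜 is a Lebesgue null set; equivalently, 𝒜 has full Lebesgue measure 1 in [0,1]. -/
open Filter Finset MeasureTheory

set_option maxHeartbeats 1000000 in
/-- The main pointwise lemma: an irrational number in `[0,1]` which is not Liouville
with exponent `s = n/(2Δ) + 1` belongs to `𝒜`. -/
lemma mem_Aall_of_not_liouvilleWith (n : ℕ) (hn : 2 ≤ n) (Δ : ℝ) (hΔ0 : 0 < Δ) (hΔ1 : Δ < 1)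
    (t : ℝ) (ht : t ∈ Set.Icc (0 : ℝ) 1) (hirr : Irrational t)
    (hL : ¬ LiouvilleWith ((n : ℝ) / (2 * Δ) + 1) t) : t ∈ Aall n Δ := by
  have hn2 : (2 : ℝ) ≤ (n : ℝ) := by exact_mod_cast hn
  set s : ℝ := (n : ℝ) / (2 * Δ) + 1 with hs_def
  have hs2 : 2 < s := by
    have : 1 < (n : ℝ) / (2 * Δ) := by
      rw [lt_div_iff₀ (by positivity)]
      linarith
    simp only [hs_def]; linarith
  -- the Diophantine condition from non-Liouville-ness
  have h1 : ¬ ∃ᶠ q : ℕ in atTop, ∃ m : ℤ, t ≠ (m : ℝ) / q ∧ |t - (m : ℝ) / q| < 1 / (q : ℝ) ^ s :=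
    fun h => hL ⟨1, h⟩
  rw [Filter.not_frequently] at h1
  obtain ⟨Q₁, hQ₁⟩ := eventually_atTop.mp h1
  set Q₀ : ℕ := max Q₁ 1 with hQ₀_def
  have key_dio : ∀ q : ℕ, Q₀ ≤ q → ∀ m : ℤ, 1 / (q : ℝ) ^ s ≤ |t - (m : ℝ) / q| := by
    intro q hq m
    have hne : t ≠ (m : ℝ) / q := by
      intro h
      exact hirr ⟨(m : ℚ) / (q : ℚ), by push_cast; exact h.symm⟩
    have h2 := hQ₁ q (le_trans (le_max_left _ _) hq)
    by_contra hcon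
    push_neg at hcon
    exact h2 ⟨m, hne, hcon⟩
  -- the gap for small denominators
  set S : Finset (ℤ × ℤ) := Finset.Icc 1 (Q₀ : ℤ) ×ˢ Finset.Icc (-(Q₀ : ℤ)) (2 * Q₀) with hS_def
  have hQ₀1 : 1 ≤ Q₀ := le_max_right _ _
  have hQ₀1' : (1 : ℤ) ≤ (Q₀ : ℤ) := by exact_mod_cast hQ₀1
  have hmemS : ((1 : ℤ), (0 : ℤ)) ∈ S := by
    simp only [hS_def, Finset.mem_product, Finset.mem_Icc]
    omega
  set δ : ℝ := S.inf' ⟨_, hmemS⟩ (fun p => |t - (p.2 : ℝ) / (p.1 : ℝ)|) with hδ_def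
  have hδpos : 0 < δ := by
    rw [hδ_def]; refine (Finset.lt_inf'_iff _).2 ?_
    intro p hp
    have hne : t ≠ (p.2 : ℝ) / (p.1 : ℝ) := by
      intro h
      exact hirr ⟨(p.2 : ℚ) / (p.1 : ℚ), by push_cast; exact h.symm⟩
    exact abs_pos.2 (sub_ne_zero.2 hne)
  have hnd : (0 : ℝ) < (n : ℝ) - Δ := by linarith
  refine ⟨ht, max 1 ((1 / δ) ^ ((n : ℝ) - Δ)⁻¹), fun M hM => ?_⟩
  have hM1 : (1 : ℝ) ≤ M := le_trans (le_max_left _ _) hM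
  have hM0 : (0 : ℝ) < M := by linarith
  have hMδ : 1 / δ ≤ M ^ ((n : ℝ) - Δ) := by
    have h0 : (0 : ℝ) ≤ 1 / δ := by positivity
    calc 1 / δ = ((1 / δ) ^ ((n : ℝ) - Δ)⁻¹) ^ ((n : ℝ) - Δ) := by
          rw [← Real.rpow_mul h0, inv_mul_cancel₀ hnd.ne', Real.rpow_one]
      _ ≤ M ^ ((n : ℝ) - Δ) :=
          Real.rpow_le_rpow (Real.rpow_nonneg h0 _) (le_trans (le_max_right _ _) hM) hnd.le
  have hMnd1 : (1 : ℝ) ≤ M ^ ((n : ℝ) - Δ) := Real.one_le_rpow hM1 hnd.le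
  set N : ℕ := ⌊M ^ ((n : ℝ) - Δ)⌋₊ with hN_def
  have hN1 : 1 ≤ N := Nat.le_floor (by exact_mod_cast hMnd1)
  have hNle : (N : ℝ) ≤ M ^ ((n : ℝ) - Δ) := Nat.floor_le (by positivity)
  have hNgt : M ^ ((n : ℝ) - Δ) < (N : ℝ) + 1 := Nat.lt_floor_add_one _
  obtain ⟨j, k, hk0, hkN, hjk⟩ := Real.exists_int_int_abs_mul_sub_le t (Nat.lt_of_lt_of_le Nat.zero_lt_one hN1)
  have hk1 : (1 : ℝ) ≤ (k : ℝ) := by exact_mod_cast hk0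
  have hk0' : (0 : ℝ) < (k : ℝ) := by linarith
  have hkNr : (k : ℝ) ≤ (N : ℝ) := by exact_mod_cast hkN
  have hN1r : (1 : ℝ) ≤ (N : ℝ) := by exact_mod_cast hN1
  -- the Dirichlet approximation as a fraction
  have happ : |t - (j : ℝ) / k| ≤ 1 / ((k : ℝ) * ((N : ℝ) + 1)) := by
    have e : t - (j : ℝ) / k = ((k : ℝ) * t - j) / k := by field_simp
    rw [e, abs_div, abs_of_pos hk0', div_le_div_iff₀ hk0' (by positivity)]
    calc |(k : ℝ) * t - j| * ((k : ℝ) * ((N : ℝ) + 1))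
        = (|(k : ℝ) * t - j| * ((N : ℝ) + 1)) * k := by ring
      _ ≤ (1 / ((N : ℝ) + 1) * ((N : ℝ) + 1)) * k := by
          gcongr
      _ = 1 * k := by field_simp
  set r : ℚ := (j : ℚ) / (k : ℚ) with hr_def
  set u : ℤ := r.num with hu_def
  set Q : ℕ := r.den with hQ_def
  have hQpos : 0 < Q := r.pos
  have hQpos' : (0 : ℝ) < (Q : ℝ) := by exact_mod_cast hQpos
  have hval : (u : ℝ) / (Q : ℝ) = (j : ℝ) / (k : ℝ) := by
    have h2 : ((r : ℚ) : ℝ) = (u : ℝ) / (Q : ℝ) := by rw [Rat.cast_def]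
    rw [← h2, hr_def]; push_cast; ring
  have hQk : (Q : ℤ) ∣ k := by
    have := Rat.den_dvd j k
    rwa [Rat.divInt_eq_div, ← hr_def, ← hQ_def] at this
  have hQkr : (Q : ℝ) ≤ (k : ℝ) := by exact_mod_cast Int.le_of_dvd hk0 hQk
  have happ' : |t - (u : ℝ) / (Q : ℝ)| ≤ 1 / ((k : ℝ) * ((N : ℝ) + 1)) := by rw [hval]; exact happ
  have hIsApp : IsApproximant t u (Q : ℤ) := by
    refine ⟨by exact_mod_cast hQpos, ?_, ?_⟩
    · simpa [Int.gcd] using r.reduced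
    · have hlt : 1 / ((k : ℝ) * ((N : ℝ) + 1)) < 1 / (Q : ℝ) ^ 2 := by
        apply one_div_lt_one_div_of_lt (by positivity)
        nlinarith
      calc |t - (u : ℝ) / ((Q : ℤ) : ℝ)| ≤ 1 / ((k : ℝ) * ((N : ℝ) + 1)) := by
            push_cast; exact happ'
        _ < 1 / (Q : ℝ) ^ 2 := hlt
        _ = 1 / ((Q : ℤ) : ℝ) ^ 2 := by push_cast; ring
  refine ⟨u, (Q : ℤ), hIsApp, ?_, ?_⟩
  · -- lower bound  M ^ Δ < Q
    by_cases hQQ₀ : Q₀ ≤ Q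
    · have hd := key_dio Q hQQ₀ u
      have hQs : (Q : ℝ) * ((N : ℝ) + 1) ≤ (Q : ℝ) ^ s := by
        have h3 : 1 / ((k : ℝ) * ((N : ℝ) + 1)) ≤ 1 / ((Q : ℝ) * ((N : ℝ) + 1)) := by gcongr
        have h4 : 1 / (Q : ℝ) ^ s ≤ 1 / ((Q : ℝ) * ((N : ℝ) + 1)) :=
          le_trans (le_trans hd happ') h3
        have h5 : (0 : ℝ) < (Q : ℝ) ^ s := Real.rpow_pos_of_pos hQpos' _
        rw [div_le_div_iff₀ (Real.rpow_pos_of_pos hQpos' _) (by positivity)] at h4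
        nlinarith
      have hsplit : (Q : ℝ) ^ s = (Q : ℝ) * (Q : ℝ) ^ (s - 1) := by
        have h := Real.rpow_add hQpos' 1 (s - 1)
        rw [Real.rpow_one] at h
        calc (Q : ℝ) ^ s = (Q : ℝ) ^ (1 + (s - 1)) := by ring_nf
          _ = (Q : ℝ) * (Q : ℝ) ^ (s - 1) := h
      have hNQ : (N : ℝ) + 1 ≤ (Q : ℝ) ^ (s - 1) := by
        rw [hsplit] at hQs
        exact le_of_mul_le_mul_left hQs hQpos'
      by_contra hle
      push_neg at hle
      have hQM : (Q : ℝ) ≤ M ^ Δ := by exact_mod_cast hle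
      have h6 : (Q : ℝ) ^ (s - 1) ≤ (M ^ Δ) ^ (s - 1) :=
        Real.rpow_le_rpow hQpos'.le hQM (by linarith)
      have h7 : (M ^ Δ) ^ (s - 1) = M ^ (Δ * (s - 1)) := by
        rw [← Real.rpow_mul hM0.le]
      have h8 : Δ * (s - 1) = (n : ℝ) / 2 := by
        rw [hs_def]; field_simp; ring
      have h9 : M ^ ((n : ℝ) / 2) ≤ M ^ ((n : ℝ) - Δ) :=
        Real.rpow_le_rpow_of_exponent_le hM1 (by linarith)
      rw [h7, h8] at h6
      linarith
    · -- small denominator: contradiction via δ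
      exfalso
      push_neg at hQQ₀
      have hhalf : |t - (u : ℝ) / (Q : ℝ)| ≤ 1 / 2 := by
        refine happ'.trans ?_
        rw [div_le_div_iff₀ (by positivity) (by norm_num)]
        nlinarith
      obtain ⟨ht0, ht1⟩ := ht
      have habs := abs_le.mp hhalf
      have hb1 : -(1 : ℝ) / 2 ≤ (u : ℝ) / (Q : ℝ) := by linarith [habs.2]
      have hb2 : (u : ℝ) / (Q : ℝ) ≤ 3 / 2 := by linarith [habs.1]
      have hu1 : -((Q₀ : ℝ)) ≤ (u : ℝ) := by
        rw [div_le_div_iff₀ (by norm_num) hQpos'] at hb1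
        have : (Q : ℝ) ≤ (Q₀ : ℝ) := by exact_mod_cast hQQ₀.le
        nlinarith
      have hu2 : (u : ℝ) ≤ 2 * (Q₀ : ℝ) := by
        rw [div_le_div_iff₀ hQpos' (by norm_num)] at hb2
        have : (Q : ℝ) ≤ (Q₀ : ℝ) := by exact_mod_cast hQQ₀.le
        nlinarith
      have hmem : ((Q : ℤ), u) ∈ S := by
        simp only [hS_def, Finset.mem_product, Finset.mem_Icc]
        constructor
        · constructor
          · exact_mod_cast hQpos
          · exact_mod_cast hQQ₀.le
        · constructor
          · exact_mod_cast hu1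
          · exact_mod_cast hu2
      have hδle : δ ≤ |t - (u : ℝ) / (Q : ℝ)| := by
        have := Finset.inf'_le (fun p : ℤ × ℤ => |t - (p.2 : ℝ) / (p.1 : ℝ)|) hmem
        simpa [hδ_def] using this
      have h10 : 1 / ((N : ℝ) + 1) < δ := by
        rw [div_lt_iff₀ (by positivity)]
        have h11 : 1 / δ < (N : ℝ) + 1 := lt_of_le_of_lt hMδ hNgt
        rw [div_lt_iff₀ hδpos] at h11
        nlinarith
      have h12 : 1 / ((k : ℝ) * ((N : ℝ) + 1)) ≤ 1 / ((N : ℝ) + 1) := by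
        apply one_div_le_one_div_of_le (by positivity)
        nlinarith
      linarith [hδle.trans happ']
  · -- upper bound  Q ≤ M ^ (n - Δ)
    have : ((Q : ℤ) : ℝ) = (Q : ℝ) := by push_cast; ring
    rw [this]
    linarith

/-- `[0,1] \ 𝒜` is a Lebesgue null set. -/
theorem stmt3 (n : ℕ) (hn : 2 ≤ n) (Δ : ℝ) (hΔ0 : 0 < Δ) (hΔ1 : Δ < 1)
    (hΔ2 : n = 2 → Δ < 1 / 2) :
    volume (Set.Icc (0 : ℝ) 1 \ Aall n Δ) = 0 := by
  have hn2 : (2 : ℝ) ≤ (n : ℝ) := by exact_mod_cast hn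
  set s : ℝ := (n : ℝ) / (2 * Δ) + 1 with hs_def
  have hs2 : 2 < s := by
    have : 1 < (n : ℝ) / (2 * Δ) := by
      rw [lt_div_iff₀ (by positivity)]
      linarith
    simp only [hs_def]; linarith
  have hsub : Set.Icc (0 : ℝ) 1 \ Aall n Δ ⊆
      (Set.range ((↑) : ℚ → ℝ)) ∪ {x : ℝ | LiouvilleWith s x} := by
    rintro t ⟨ht, hA⟩
    by_cases h1 : Irrational t
    · right
      by_contra h2
      exact hA (mem_Aall_of_not_liouvilleWith n hn Δ hΔ0 hΔ1 t ht h1 h2)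
    · left
      rw [Irrational] at h1
      exact not_not.mp h1
  refine measure_mono_null hsub (measure_union_null ?_ ?_)
  · exact (Set.countable_range _).measure_zero _
  · refine measure_mono_null ?_ volume_iUnion_setOf_liouvilleWith
    intro x hx
    exact Set.mem_iUnion.2 ⟨s, Set.mem_iUnion.2 ⟨hs2, hx⟩⟩
end

section
/- For every real α with 1/(n−Δ) < α < 1/Δ there is a constant c > 0, depending only on n, Δ and α, such that for every integer m ≥ 2 and every t₀ ∈ (0,1], the Lebesgue outer measure of [0,t₀] ∖ ℬ_{m,α} is at most c·t₀^{1+(n−1−2Δ)α}·m^{1+2Δ−n}; equivalently, the Lebesgue measure of ℬ_{m,α} ∩ [0,t₀] is at least t₀·(1 − c·t₀^{(n−1−2Δ)α}·m^{1+2Δ−n}). -/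
open Filter Finset MeasureTheory

/- ---------- auxiliary lemmas ---------- -/

/-- Dirichlet's theorem, reformulated: for every `t` and `R ≥ 1` there is an
approximant with denominator at most `R` and error less than `1/(q·R)`. -/
lemma exists_approximant_aux (t R : ℝ) (hR : 1 ≤ R) :
    ∃ u q : ℤ, IsApproximant t u q ∧ (q : ℝ) ≤ R ∧
      |t - (u : ℝ) / (q : ℝ)| < 1 / ((q : ℝ) * R) := by
  have hn : 0 < ⌊R⌋₊ := Nat.floor_pos.mpr hR
  obtain ⟨r, hr1, hr2⟩ := Real.exists_rat_abs_sub_le_and_den_le t hn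
  have hden0 : 0 < (r.den : ℝ) := by exact_mod_cast r.pos
  have hfl : (⌊R⌋₊ : ℝ) ≤ R := Nat.floor_le (le_trans zero_le_one hR)
  have hRfl : R < (⌊R⌋₊ : ℝ) + 1 := Nat.lt_floor_add_one R
  have hdenR : (r.den : ℝ) ≤ R := by
    calc (r.den : ℝ) ≤ (⌊R⌋₊ : ℝ) := by exact_mod_cast hr2
      _ ≤ R := hfl
  have hcast : ((r.den : ℤ) : ℝ) = (r.den : ℝ) := by push_cast; ring
  have hrr : (r : ℝ) = (r.num : ℝ) / (r.den : ℝ) := by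
    rw [Rat.cast_def]
  have hkey : |t - (r.num : ℝ) / (r.den : ℝ)| < 1 / ((r.den : ℝ) * R) := by
    rw [← hrr]
    refine lt_of_le_of_lt hr1 ?_
    rw [div_lt_div_iff₀ (by positivity) (by positivity)]
    nlinarith [abs_nonneg (t - (r : ℝ))]
  refine ⟨r.num, (r.den : ℤ), ⟨?_, ?_, ?_⟩, ?_, ?_⟩
  · exact_mod_cast r.pos
  · simpa [Int.gcd] using r.reduced
  · rw [hcast]
    refine lt_of_lt_of_le hkey ?_
    rw [sq]
    apply one_div_le_one_div_of_le (by positivity)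
    nlinarith
  · rw [hcast]; exact hdenR
  · rw [hcast]; exact hkey

lemma card_Icc_le_real (x : ℝ) (hx : 0 ≤ x) :
    ((Finset.Icc (1 : ℤ) ⌊x⌋).card : ℝ) ≤ x := by
  rw [Int.card_Icc]
  have h1 : ⌊x⌋ + 1 - 1 = ⌊x⌋ := by ring
  rw [h1]
  rcases le_or_gt 0 ⌊x⌋ with h | h
  · have : ((⌊x⌋.toNat : ℤ) : ℝ) ≤ x := by
      rw [Int.toNat_of_nonneg h]; exact Int.floor_le x
    exact_mod_cast this
  · rw [Int.toNat_of_nonpos h.le]; simpa using hx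

/-- The covering lemma: the set of `t ∈ [a,2a]` with no approximant whose
denominator lies in `(Q,R]` has measure at most `6aQ/R`. -/
lemma cover_lemma (a Q R : ℝ) (ha : 0 < a) (hQ : 0 ≤ Q) (hR1 : 1 ≤ R) (hRa : 1 / R ≤ a) :
    volume {t : ℝ | t ∈ Set.Icc a (2 * a) ∧
        ¬∃ u q : ℤ, IsApproximant t u q ∧ Q < (q : ℝ) ∧ (q : ℝ) ≤ R}
      ≤ ENNReal.ofReal (6 * a * Q / R) := by
  have hR0 : (0 : ℝ) < R := lt_of_lt_of_le one_pos hR1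
  have hsub : {t : ℝ | t ∈ Set.Icc a (2 * a) ∧
        ¬∃ u q : ℤ, IsApproximant t u q ∧ Q < (q : ℝ) ∧ (q : ℝ) ≤ R} ⊆
      ⋃ q ∈ Finset.Icc (1 : ℤ) ⌊Q⌋, ⋃ p ∈ Finset.Icc (1 : ℤ) ⌊3 * a * (q : ℝ)⌋,
        Metric.ball ((p : ℝ) / (q : ℝ)) (1 / ((q : ℝ) * R)) := by
    rintro t ⟨⟨hta, htb⟩, hfail⟩
    obtain ⟨u, q, ⟨hq1, hgcd, happ⟩, hqR, herr⟩ := exists_approximant_aux t R hR1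
    have hq0 : (0 : ℝ) < (q : ℝ) := by exact_mod_cast lt_of_lt_of_le zero_lt_one hq1
    have hqQ : (q : ℝ) ≤ Q := by
      by_contra h
      push_neg at h
      exact hfail ⟨u, q, ⟨hq1, hgcd, happ⟩, h, hqR⟩
    have hrad : 1 / ((q : ℝ) * R) ≤ a := by
      refine le_trans ?_ hRa
      apply one_div_le_one_div_of_le hR0
      have hq1' : (1 : ℝ) ≤ (q : ℝ) := by exact_mod_cast hq1
      nlinarith
    have habs := abs_sub_lt_iff.mp herr
    have hu0 : (0 : ℝ) < (u : ℝ) / (q : ℝ) := by nlinarith [habs.1]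
    have hu1 : 1 ≤ u := by
      have : (0 : ℝ) < (u : ℝ) := by
        by_contra h
        push_neg at h
        nlinarith [div_nonpos_of_nonpos_of_nonneg h hq0.le]
      exact_mod_cast this
    have hub : (u : ℝ) ≤ 3 * a * (q : ℝ) := by
      have h3 : (u : ℝ) / (q : ℝ) < 3 * a := by nlinarith [habs.2]
      nlinarith [(div_lt_iff₀ hq0).mp h3]
    refine Set.mem_iUnion₂.mpr ⟨q, ?_, Set.mem_iUnion₂.mpr ⟨u, ?_, ?_⟩⟩
    · exact Finset.mem_Icc.mpr ⟨hq1, Int.le_floor.mpr hqQ⟩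
    · exact Finset.mem_Icc.mpr ⟨hu1, Int.le_floor.mpr hub⟩
    · rw [Metric.mem_ball, Real.dist_eq]
      exact herr
  refine (measure_mono hsub).trans ?_
  refine le_trans (measure_biUnion_finset_le _ _) ?_
  have hstep : ∀ q ∈ Finset.Icc (1 : ℤ) ⌊Q⌋,
      volume (⋃ p ∈ Finset.Icc (1 : ℤ) ⌊3 * a * (q : ℝ)⌋,
        Metric.ball ((p : ℝ) / (q : ℝ)) (1 / ((q : ℝ) * R))) ≤ ENNReal.ofReal (6 * a / R) := by
    intro q hq
    rw [Finset.mem_Icc] at hq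
    have hq0 : (0 : ℝ) < (q : ℝ) := by exact_mod_cast lt_of_lt_of_le zero_lt_one hq.1
    refine le_trans (measure_biUnion_finset_le _ _) ?_
    have hball : ∀ p ∈ Finset.Icc (1 : ℤ) ⌊3 * a * (q : ℝ)⌋,
        volume (Metric.ball ((p : ℝ) / (q : ℝ)) (1 / ((q : ℝ) * R)))
          = ENNReal.ofReal (2 * (1 / ((q : ℝ) * R))) := fun p _ => Real.volume_ball _ _
    rw [Finset.sum_congr rfl hball, Finset.sum_const, nsmul_eq_mul]
    have hcard : ((Finset.Icc (1 : ℤ) ⌊3 * a * (q : ℝ)⌋).card : ℝ) ≤ 3 * a * (q : ℝ) :=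
      card_Icc_le_real _ (by positivity)
    calc ((Finset.Icc (1 : ℤ) ⌊3 * a * (q : ℝ)⌋).card : ENNReal) * ENNReal.ofReal (2 * (1 / ((q : ℝ) * R)))
        = ENNReal.ofReal (((Finset.Icc (1 : ℤ) ⌊3 * a * (q : ℝ)⌋).card : ℝ)) *
            ENNReal.ofReal (2 * (1 / ((q : ℝ) * R))) := by
          rw [ENNReal.ofReal_natCast]
      _ ≤ ENNReal.ofReal (3 * a * (q : ℝ)) * ENNReal.ofReal (2 * (1 / ((q : ℝ) * R))) :=
          mul_le_mul_left (ENNReal.ofReal_le_ofReal hcard) _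
      _ = ENNReal.ofReal ((3 * a * (q : ℝ)) * (2 * (1 / ((q : ℝ) * R)))) := by
          rw [← ENNReal.ofReal_mul (by positivity)]
      _ = ENNReal.ofReal (6 * a / R) := by
          congr 1
          field_simp
          ring
  refine le_trans (Finset.sum_le_sum hstep) ?_
  rw [Finset.sum_const, nsmul_eq_mul]
  calc ((Finset.Icc (1 : ℤ) ⌊Q⌋).card : ENNReal) * ENNReal.ofReal (6 * a / R)
      = ENNReal.ofReal (((Finset.Icc (1 : ℤ) ⌊Q⌋).card : ℝ)) * ENNReal.ofReal (6 * a / R) := by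
        rw [ENNReal.ofReal_natCast]
    _ ≤ ENNReal.ofReal Q * ENNReal.ofReal (6 * a / R) :=
        mul_le_mul_left (ENNReal.ofReal_le_ofReal (card_Icc_le_real _ hQ)) _
    _ = ENNReal.ofReal (Q * (6 * a / R)) := by rw [← ENNReal.ofReal_mul hQ]
    _ = ENNReal.ofReal (6 * a * Q / R) := by congr 1; ring

lemma tsum_ofReal_geom_le (C r : ℝ) (hC : 0 ≤ C) (hr0 : 0 ≤ r) (hr : r ≤ 1 / 2) :
    ∑' k : ℕ, ENNReal.ofReal (C * r ^ k) ≤ ENNReal.ofReal (2 * C) := by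
  have h1 : ∀ k : ℕ, ENNReal.ofReal (C * r ^ k) = ENNReal.ofReal C * ENNReal.ofReal r ^ k := by
    intro k
    rw [ENNReal.ofReal_mul hC, ENNReal.ofReal_pow hr0]
  rw [tsum_congr h1, ENNReal.tsum_mul_left, ENNReal.tsum_geometric]
  have h2 : (1 - ENNReal.ofReal r)⁻¹ ≤ 2 := by
    rw [← ENNReal.ofReal_one, ← ENNReal.ofReal_sub _ hr0]
    calc (ENNReal.ofReal (1 - r))⁻¹ ≤ (ENNReal.ofReal (1 / 2))⁻¹ := by
          exact ENNReal.inv_le_inv.mpr (ENNReal.ofReal_le_ofReal (by linarith))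
      _ = 2 := by
          rw [← ENNReal.ofReal_inv_of_pos (by norm_num)]
          norm_num
  calc ENNReal.ofReal C * (1 - ENNReal.ofReal r)⁻¹ ≤ ENNReal.ofReal C * 2 := by gcongr
    _ = ENNReal.ofReal (2 * C) := by
        rw [ENNReal.ofReal_mul (by norm_num : (0:ℝ) ≤ 2)]
        rw [mul_comm]
        norm_num

lemma pow_rpow_swap (j : ℕ) (c : ℝ) : ((2 : ℝ) ^ j) ^ c = ((2 : ℝ) ^ c) ^ j := by
  rw [← Real.rpow_natCast (2 : ℝ) j, ← Real.rpow_natCast ((2 : ℝ) ^ c) j,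
    ← Real.rpow_mul (by norm_num), ← Real.rpow_mul (by norm_num), mul_comm]

/-- Measure estimate on a dyadic interval `[a, 2a]`. -/
lemma interval_lemma (n : ℕ) (hn : 2 ≤ n) (Δ : ℝ) (hΔ0 : 0 < Δ) (hΔ1 : Δ < 1)
    (hΔn : 2 * Δ + 1 ≤ (n : ℝ)) (α : ℝ) (hα0 : 0 < α) (hα1 : 1 ≤ α * ((n : ℝ) - Δ))
    (m : ℤ) (hm : 2 ≤ m) (a : ℝ) (ha : 0 < a) (ha1 : 2 * a ≤ 1) :
    volume (Set.Icc a (2 * a) \ Bset n Δ m α) ≤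
      ENNReal.ofReal (12 * (m : ℝ) ^ (2 * Δ - (n : ℝ)) * (2 * a) ^ (1 + ((n : ℝ) - 2 * Δ) * α)) := by
  have h2a0 : (0 : ℝ) < 2 * a := by linarith
  have hm2 : (2 : ℝ) ≤ (m : ℝ) := by exact_mod_cast hm
  have hn2 : (2 : ℝ) ≤ (n : ℝ) := by exact_mod_cast hn
  have hnΔ : (0 : ℝ) < (n : ℝ) - Δ := by linarith
  have hnΔ1 : (1 : ℝ) ≤ (n : ℝ) - Δ := by linarith
  set N : ℝ := (m : ℝ) * (2 * a) ^ (-α) with hNdef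
  have hpow1 : (1 : ℝ) ≤ (2 * a) ^ (-α) :=
    Real.one_le_rpow_of_pos_of_le_one_of_nonpos h2a0 ha1 (by linarith)
  have hN2 : (2 : ℝ) ≤ N := by nlinarith
  have hN0 : (0 : ℝ) < N := by linarith
  have hsub : Set.Icc a (2 * a) \ Bset n Δ m α ⊆
      ⋃ k : ℕ, {t : ℝ | t ∈ Set.Icc a (2 * a) ∧
        ¬∃ u q : ℤ, IsApproximant t u q ∧ (N * 2 ^ (k + 1)) ^ Δ < (q : ℝ) ∧
          (q : ℝ) ≤ (N * 2 ^ k) ^ ((n : ℝ) - Δ)} := by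
    rintro t ⟨htI, htB⟩
    have ht0 : 0 < t := lt_of_lt_of_le ha htI.1
    have ht1 : t ≤ 1 := le_trans htI.2 ha1
    have hMex : ∃ M : ℝ, (m : ℝ) * t ^ (-α) ≤ M ∧
        ¬∃ u q : ℤ, IsApproximant t u q ∧ M ^ Δ < (q : ℝ) ∧ (q : ℝ) ≤ M ^ ((n : ℝ) - Δ) := by
      by_contra h
      push_neg at h
      exact htB ⟨⟨ht0, ht1⟩, h⟩
    obtain ⟨M, hM1, hM2⟩ := hMex
    have htle : (2 * a) ^ (-α) ≤ t ^ (-α) := by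
      rw [Real.rpow_neg h2a0.le, Real.rpow_neg ht0.le]
      have h1 : t ^ α ≤ (2 * a) ^ α := Real.rpow_le_rpow ht0.le htI.2 hα0.le
      have h2 : (0 : ℝ) < t ^ α := Real.rpow_pos_of_pos ht0 α
      exact inv_anti₀ h2 h1
    have hNM : N ≤ M := by
      refine le_trans ?_ hM1
      have : (0 : ℝ) ≤ (m : ℝ) := by linarith
      exact mul_le_mul_of_nonneg_left htle this
    have hM0 : (0 : ℝ) < M := lt_of_lt_of_le hN0 hNM
    have hMN1 : (1 : ℝ) ≤ M / N := (one_le_div hN0).mpr hNM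
    set k := Nat.log 2 ⌊M / N⌋₊ with hkdef
    have hfl1 : 1 ≤ ⌊M / N⌋₊ := Nat.le_floor (by exact_mod_cast hMN1)
    have hlow : (2 : ℝ) ^ k ≤ M / N := by
      have h1 : 2 ^ k ≤ ⌊M / N⌋₊ := Nat.pow_log_le_self 2 (by omega)
      calc (2 : ℝ) ^ k = ((2 ^ k : ℕ) : ℝ) := by push_cast; ring
        _ ≤ (⌊M / N⌋₊ : ℝ) := by exact_mod_cast h1
        _ ≤ M / N := Nat.floor_le (le_trans zero_le_one hMN1)
    have hhigh : M / N ≤ (2 : ℝ) ^ (k + 1) := by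
      have h1 : ⌊M / N⌋₊ < 2 ^ (k + 1) := Nat.lt_pow_succ_log_self (by norm_num) _
      have h2 : M / N < (⌊M / N⌋₊ : ℝ) + 1 := Nat.lt_floor_add_one _
      have h3 : ((⌊M / N⌋₊ : ℕ) : ℝ) + 1 ≤ ((2 ^ (k + 1) : ℕ) : ℝ) := by exact_mod_cast h1
      have h4 : ((2 ^ (k + 1) : ℕ) : ℝ) = (2 : ℝ) ^ (k + 1) := by push_cast; ring
      linarith
    have hMk : N * 2 ^ k ≤ M := by
      have := (le_div_iff₀ hN0).mp hlow
      linarith [this]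
    have hMk1 : M ≤ N * 2 ^ (k + 1) := by
      have := (div_le_iff₀ hN0).mp hhigh
      linarith [this]
    refine Set.mem_iUnion.mpr ⟨k, htI, ?_⟩
    rintro ⟨u, q, happ, hq1, hq2⟩
    refine hM2 ⟨u, q, happ, ?_, ?_⟩
    · exact lt_of_le_of_lt (Real.rpow_le_rpow hM0.le hMk1 hΔ0.le) hq1
    · exact le_trans hq2 (Real.rpow_le_rpow (by positivity) hMk hnΔ.le)
  refine le_trans (measure_mono hsub) ?_
  refine le_trans (measure_iUnion_le _) ?_
  have hNnΔ : (2 : ℝ) ≤ N ^ ((n : ℝ) - Δ) := by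
    calc (2 : ℝ) = (2 : ℝ) ^ (1 : ℝ) := by rw [Real.rpow_one]
      _ ≤ (2 : ℝ) ^ ((n : ℝ) - Δ) :=
          Real.rpow_le_rpow_of_exponent_le (by norm_num) hnΔ1
      _ ≤ N ^ ((n : ℝ) - Δ) := Real.rpow_le_rpow (by norm_num) hN2 hnΔ.le
  have hNa : 1 / (N ^ ((n : ℝ) - Δ)) ≤ a := by
    have e1 : N ^ ((n : ℝ) - Δ) = (m : ℝ) ^ ((n : ℝ) - Δ) * ((2 * a) ^ (-α)) ^ ((n : ℝ) - Δ) :=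
      Real.mul_rpow (by linarith) (by positivity)
    have e2 : ((2 * a) ^ (-α)) ^ ((n : ℝ) - Δ) = (2 * a) ^ (-(α * ((n : ℝ) - Δ))) := by
      rw [← Real.rpow_mul h2a0.le]
      congr 1
      ring
    have hm' : (2 : ℝ) ≤ (m : ℝ) ^ ((n : ℝ) - Δ) := by
      calc (2 : ℝ) = (2 : ℝ) ^ (1 : ℝ) := by rw [Real.rpow_one]
        _ ≤ (2 : ℝ) ^ ((n : ℝ) - Δ) := Real.rpow_le_rpow_of_exponent_le (by norm_num) hnΔ1
        _ ≤ (m : ℝ) ^ ((n : ℝ) - Δ) := Real.rpow_le_rpow (by norm_num) hm2 hnΔ.le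
    have hup : (2 * a) ^ (α * ((n : ℝ) - Δ)) ≤ 2 * a := by
      calc (2 * a) ^ (α * ((n : ℝ) - Δ)) ≤ (2 * a) ^ (1 : ℝ) :=
            Real.rpow_le_rpow_of_exponent_ge h2a0 ha1 hα1
        _ = 2 * a := Real.rpow_one _
    rw [e1, e2, Real.rpow_neg h2a0.le]
    rw [one_div, mul_inv, inv_inv]
    have hpos1 : (0 : ℝ) < (m : ℝ) ^ ((n : ℝ) - Δ) := by positivity
    have hpos2 : (0 : ℝ) ≤ (2 * a) ^ (α * ((n : ℝ) - Δ)) := by positivity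
    calc ((m : ℝ) ^ ((n : ℝ) - Δ))⁻¹ * (2 * a) ^ (α * ((n : ℝ) - Δ))
        ≤ (1 / 2) * (2 * a) := by
          apply mul_le_mul _ hup hpos2 (by norm_num)
          rw [inv_le_comm₀ (by positivity) (by norm_num)]
          simpa [one_div] using hm'
      _ = a := by ring
  have hbound : ∀ k : ℕ, volume {t : ℝ | t ∈ Set.Icc a (2 * a) ∧
        ¬∃ u q : ℤ, IsApproximant t u q ∧ (N * 2 ^ (k + 1)) ^ Δ < (q : ℝ) ∧
          (q : ℝ) ≤ (N * 2 ^ k) ^ ((n : ℝ) - Δ)} ≤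
      ENNReal.ofReal ((6 * a * 2 ^ Δ * N ^ (2 * Δ - (n : ℝ))) *
        ((2 : ℝ) ^ (2 * Δ - (n : ℝ))) ^ k) := by
    intro k
    have hpk : (1 : ℝ) ≤ (2 : ℝ) ^ k := one_le_pow₀ (by norm_num)
    have hRge : N ^ ((n : ℝ) - Δ) ≤ (N * 2 ^ k) ^ ((n : ℝ) - Δ) :=
      Real.rpow_le_rpow hN0.le (by nlinarith) hnΔ.le
    have hR1 : 1 ≤ (N * 2 ^ k) ^ ((n : ℝ) - Δ) := by linarith
    have hRa : 1 / ((N * 2 ^ k) ^ ((n : ℝ) - Δ)) ≤ a := by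
      refine le_trans ?_ hNa
      apply one_div_le_one_div_of_le (by positivity)
      exact hRge
    refine le_trans (cover_lemma a _ _ ha (by positivity) hR1 hRa) ?_
    refine ENNReal.ofReal_le_ofReal (le_of_eq ?_)
    have hQeq : (N * 2 ^ (k + 1)) ^ Δ = N ^ Δ * (2 : ℝ) ^ Δ * ((2 : ℝ) ^ Δ) ^ k := by
      rw [Real.mul_rpow hN0.le (by positivity), pow_rpow_swap (k + 1) Δ, pow_succ]
      ring
    have hReq : (N * 2 ^ k) ^ ((n : ℝ) - Δ) = N ^ ((n : ℝ) - Δ) * ((2 : ℝ) ^ ((n : ℝ) - Δ)) ^ k := by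
      rw [Real.mul_rpow hN0.le (by positivity), pow_rpow_swap k ((n : ℝ) - Δ)]
    have hN2Δ : N ^ (2 * Δ - (n : ℝ)) = N ^ Δ / N ^ ((n : ℝ) - Δ) := by
      rw [← Real.rpow_sub hN0]
      congr 1
      ring
    have h22Δ : (2 : ℝ) ^ (2 * Δ - (n : ℝ)) = (2 : ℝ) ^ Δ / (2 : ℝ) ^ ((n : ℝ) - Δ) := by
      rw [← Real.rpow_sub (by norm_num)]
      congr 1
      ring
    rw [hQeq, hReq, hN2Δ, h22Δ, div_pow]
    have hne1 : N ^ ((n : ℝ) - Δ) ≠ 0 := by positivity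
    have hne2 : ((2 : ℝ) ^ ((n : ℝ) - Δ)) ^ k ≠ 0 := by positivity
    field_simp
  refine le_trans (ENNReal.tsum_le_tsum hbound) ?_
  have hr0 : (0 : ℝ) ≤ (2 : ℝ) ^ (2 * Δ - (n : ℝ)) := by positivity
  have hrhalf : (2 : ℝ) ^ (2 * Δ - (n : ℝ)) ≤ 1 / 2 := by
    calc (2 : ℝ) ^ (2 * Δ - (n : ℝ)) ≤ (2 : ℝ) ^ (-1 : ℝ) :=
          Real.rpow_le_rpow_of_exponent_le (by norm_num) (by linarith)
      _ = 1 / 2 := by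
          rw [Real.rpow_neg_one]
          norm_num
  refine le_trans (tsum_ofReal_geom_le _ _ (by positivity) hr0 hrhalf) ?_
  refine ENNReal.ofReal_le_ofReal ?_
  have hNfact : N ^ (2 * Δ - (n : ℝ)) =
      (m : ℝ) ^ (2 * Δ - (n : ℝ)) * (2 * a) ^ (((n : ℝ) - 2 * Δ) * α) := by
    rw [hNdef, Real.mul_rpow (by linarith) (by positivity), ← Real.rpow_mul h2a0.le]
    congr 2
    ring
  have hsplit : (2 * a) ^ (1 + ((n : ℝ) - 2 * Δ) * α) =
      (2 * a) * (2 * a) ^ (((n : ℝ) - 2 * Δ) * α) := by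
    rw [Real.rpow_add h2a0, Real.rpow_one]
  rw [hNfact, hsplit]
  have h2Δ2 : (2 : ℝ) ^ Δ ≤ 2 := by
    calc (2 : ℝ) ^ Δ ≤ (2 : ℝ) ^ (1 : ℝ) := Real.rpow_le_rpow_of_exponent_le (by norm_num) hΔ1.le
      _ = 2 := Real.rpow_one 2
  have hp1 : (0 : ℝ) ≤ (m : ℝ) ^ (2 * Δ - (n : ℝ)) := by positivity
  have hp2 : (0 : ℝ) ≤ (2 * a) ^ (((n : ℝ) - 2 * Δ) * α) := by positivity
  nlinarith [mul_nonneg hp1 hp2, mul_nonneg (mul_nonneg hp1 hp2) ha.le]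

/-- for `1/(n-Δ) < α < 1/Δ` there is `c > 0`, depending only on `n`, `Δ`, `α`,
such that for every integer `m ≥ 2` and every `t₀ ∈ (0,1]`, the Lebesgue (outer) measure of
`[0,t₀] \ ℬ_{m,α}` is at most `c·t₀^(1+(n-1-2Δ)α)·m^(1+2Δ-n)`. -/
theorem stmt6 (n : ℕ) (hn : 2 ≤ n) (Δ : ℝ) (hΔ0 : 0 < Δ) (hΔ1 : Δ < 1)
    (hΔ2 : n = 2 → Δ < 1 / 2) (α : ℝ) (hα1 : ((n : ℝ) - Δ)⁻¹ < α) (hα2 : α < Δ⁻¹) :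
    ∃ c : ℝ, 0 < c ∧ ∀ m : ℤ, 2 ≤ m → ∀ t₀ : ℝ, t₀ ∈ Set.Ioc (0 : ℝ) 1 →
      volume (Set.Icc (0 : ℝ) t₀ \ Bset n Δ m α) ≤
        ENNReal.ofReal (c * t₀ ^ (1 + ((n : ℝ) - 1 - 2 * Δ) * α) *
          (m : ℝ) ^ (1 + 2 * Δ - (n : ℝ))) := by
  have hn2 : (2 : ℝ) ≤ (n : ℝ) := by exact_mod_cast hn
  have hnΔ0 : (0 : ℝ) < (n : ℝ) - Δ := by linarith
  have hα0 : 0 < α := lt_trans (by positivity) hα1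
  have hα1' : 1 ≤ α * ((n : ℝ) - Δ) := by
    have h := mul_lt_mul_of_pos_right hα1 hnΔ0
    rw [inv_mul_cancel₀ hnΔ0.ne'] at h
    linarith
  have hΔn : 2 * Δ + 1 ≤ (n : ℝ) := by
    rcases eq_or_lt_of_le hn with h | h
    · have hΔhalf := hΔ2 h.symm
      have : (n : ℝ) = 2 := by exact_mod_cast h.symm
      rw [this]
      linarith
    · have h3 : (3 : ℕ) ≤ n := h
      have : (3 : ℝ) ≤ (n : ℝ) := by exact_mod_cast h3
      linarith
  refine ⟨24, by norm_num, ?_⟩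
  intro m hm t₀ ht₀
  obtain ⟨ht₀0, ht₀1⟩ := ht₀
  have hm2 : (2 : ℝ) ≤ (m : ℝ) := by exact_mod_cast hm
  set s : ℝ := 1 + ((n : ℝ) - 2 * Δ) * α with hsdef
  have hs1 : 1 ≤ s := by nlinarith
  have hsub : Set.Icc (0 : ℝ) t₀ \ Bset n Δ m α ⊆
      {(0 : ℝ)} ∪ ⋃ j : ℕ, (Set.Icc (t₀ / 2 ^ (j + 1)) (2 * (t₀ / 2 ^ (j + 1))) \ Bset n Δ m α) := by
    rintro t ⟨⟨ht0, htt⟩, htB⟩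
    rcases eq_or_lt_of_le ht0 with h | h
    · left
      simp [← h]
    · right
      have h1 : 1 ≤ t₀ / t := (one_le_div h).mpr htt
      set j := Nat.log 2 ⌊t₀ / t⌋₊ with hjdef
      have hfl1 : 1 ≤ ⌊t₀ / t⌋₊ := Nat.le_floor (by exact_mod_cast h1)
      have hlow : (2 : ℝ) ^ j ≤ t₀ / t := by
        have ha1 : 2 ^ j ≤ ⌊t₀ / t⌋₊ := Nat.pow_log_le_self 2 (by omega)
        calc (2 : ℝ) ^ j = ((2 ^ j : ℕ) : ℝ) := by push_cast; ring
          _ ≤ (⌊t₀ / t⌋₊ : ℝ) := by exact_mod_cast ha1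
          _ ≤ t₀ / t := Nat.floor_le (le_trans zero_le_one h1)
      have hhigh : t₀ / t ≤ (2 : ℝ) ^ (j + 1) := by
        have ha1 : ⌊t₀ / t⌋₊ < 2 ^ (j + 1) := Nat.lt_pow_succ_log_self (by norm_num) _
        have ha2 : t₀ / t < (⌊t₀ / t⌋₊ : ℝ) + 1 := Nat.lt_floor_add_one _
        have ha3 : ((⌊t₀ / t⌋₊ : ℕ) : ℝ) + 1 ≤ ((2 ^ (j + 1) : ℕ) : ℝ) := by exact_mod_cast ha1
        have ha4 : ((2 ^ (j + 1) : ℕ) : ℝ) = (2 : ℝ) ^ (j + 1) := by push_cast; ring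
        linarith
      have heq : 2 * (t₀ / 2 ^ (j + 1)) = t₀ / 2 ^ j := by
        rw [pow_succ]
        field_simp
      refine Set.mem_iUnion.mpr ⟨j, ⟨⟨?_, ?_⟩, htB⟩⟩
      · rw [div_le_iff₀ (by positivity)]
        have := (div_le_iff₀ h).mp hhigh
        nlinarith
      · rw [heq, le_div_iff₀ (by positivity)]
        have := (le_div_iff₀ h).mp hlow
        nlinarith
  refine le_trans (measure_mono hsub) ?_
  refine le_trans (measure_union_le _ _) ?_
  rw [Real.volume_singleton, zero_add]
  refine le_trans (measure_iUnion_le _) ?_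
  have hstep : ∀ j : ℕ, volume (Set.Icc (t₀ / 2 ^ (j + 1)) (2 * (t₀ / 2 ^ (j + 1))) \ Bset n Δ m α)
      ≤ ENNReal.ofReal ((12 * (m : ℝ) ^ (2 * Δ - (n : ℝ)) * t₀ ^ s) * ((2 : ℝ) ^ (-s)) ^ j) := by
    intro j
    have haj : 0 < t₀ / 2 ^ (j + 1) := by positivity
    have heq : 2 * (t₀ / 2 ^ (j + 1)) = t₀ / 2 ^ j := by
      rw [pow_succ]
      field_simp
    have haj1 : 2 * (t₀ / 2 ^ (j + 1)) ≤ 1 := by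
      rw [heq]
      have h1 : t₀ / 2 ^ j ≤ t₀ := by
        apply div_le_self ht₀0.le
        exact one_le_pow₀ (by norm_num)
      linarith
    refine le_trans (interval_lemma n hn Δ hΔ0 hΔ1 hΔn α hα0 hα1' m hm _ haj haj1) ?_
    refine ENNReal.ofReal_le_ofReal (le_of_eq ?_)
    rw [heq]
    rw [Real.div_rpow ht₀0.le (by positivity), pow_rpow_swap j s]
    rw [Real.rpow_neg (by norm_num : (0:ℝ) ≤ 2), inv_pow]
    field_simp
    rw [hsdef]
  refine le_trans (ENNReal.tsum_le_tsum hstep) ?_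
  have hr0 : (0 : ℝ) ≤ (2 : ℝ) ^ (-s) := by positivity
  have hrhalf : (2 : ℝ) ^ (-s) ≤ 1 / 2 := by
    calc (2 : ℝ) ^ (-s) ≤ (2 : ℝ) ^ (-1 : ℝ) :=
          Real.rpow_le_rpow_of_exponent_le (by norm_num) (by linarith)
      _ = 1 / 2 := by
          rw [Real.rpow_neg_one]
          norm_num
  refine le_trans (tsum_ofReal_geom_le _ _ (by positivity) hr0 hrhalf) ?_
  refine ENNReal.ofReal_le_ofReal ?_
  have hsplit : t₀ ^ s = t₀ ^ (1 + ((n : ℝ) - 1 - 2 * Δ) * α) * t₀ ^ α := by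
    rw [← Real.rpow_add ht₀0]
    congr 1
    rw [hsdef]
    ring
  have htα : t₀ ^ α ≤ 1 := Real.rpow_le_one ht₀0.le ht₀1 hα0.le
  have hmexp : (m : ℝ) ^ (2 * Δ - (n : ℝ)) ≤ (m : ℝ) ^ (1 + 2 * Δ - (n : ℝ)) :=
    Real.rpow_le_rpow_of_exponent_le (by linarith) (by linarith)
  have hp1 : (0 : ℝ) ≤ t₀ ^ (1 + ((n : ℝ) - 1 - 2 * Δ) * α) := by positivity
  have hp2 : (0 : ℝ) ≤ (m : ℝ) ^ (2 * Δ - (n : ℝ)) := by positivity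
  have hp3 : (0 : ℝ) ≤ t₀ ^ α := by positivity
  have hkey2 : (m : ℝ) ^ (2 * Δ - (n : ℝ)) * t₀ ^ α ≤ (m : ℝ) ^ (1 + 2 * Δ - (n : ℝ)) := by
    calc (m : ℝ) ^ (2 * Δ - (n : ℝ)) * t₀ ^ α ≤ (m : ℝ) ^ (2 * Δ - (n : ℝ)) * 1 :=
          mul_le_mul_of_nonneg_left htα hp2
      _ = (m : ℝ) ^ (2 * Δ - (n : ℝ)) := mul_one _
      _ ≤ _ := hmexp
  rw [hsplit]
  calc 2 * (12 * (m : ℝ) ^ (2 * Δ - (n : ℝ)) * (t₀ ^ (1 + ((n : ℝ) - 1 - 2 * Δ) * α) * t₀ ^ α))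
      = 24 * t₀ ^ (1 + ((n : ℝ) - 1 - 2 * Δ) * α) * ((m : ℝ) ^ (2 * Δ - (n : ℝ)) * t₀ ^ α) := by
        ring
    _ ≤ 24 * t₀ ^ (1 + ((n : ℝ) - 1 - 2 * Δ) * α) * (m : ℝ) ^ (1 + 2 * Δ - (n : ℝ)) := by
        have h24 : (0 : ℝ) ≤ 24 * t₀ ^ (1 + ((n : ℝ) - 1 - 2 * Δ) * α) := by positivity
        exact mul_le_mul_of_nonneg_left hkey2 h24
end

section
/- Let n ≥ 2 be an integer and let t = u/q be a rational number (u ∈ ℤ, q ∈ ℤ, q ≥ 1). Then for every real x the limit lim_{K→∞} Σ_{0<|k|≤K} e(t·k^n + x·k)/k exists, where the sum is over nonzero integers k with |k| ≤ K. -/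
open Filter Finset MeasureTheory

/-- `e(ξ) = exp(2πiξ)`. -/
noncomputable def ee (ξ : ℝ) : ℂ := Complex.exp (2 * Real.pi * Complex.I * ξ)

/-- The symmetric partial sum `S_K(t,x) = Σ_{0<|k|≤K} e(t·k^n + x·k)/k`. -/
noncomputable def SK (n : ℕ) (t x : ℝ) (K : ℕ) : ℂ :=
  ∑ k ∈ (Finset.Icc (-(K : ℤ)) (K : ℤ)).filter (· ≠ 0),
    ee (t * (k : ℝ) ^ n + x * (k : ℝ)) / (k : ℂ)



lemma ee_add (a b : ℝ) : ee (a + b) = ee a * ee b := by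
  rw [ee, ee, ee, ← Complex.exp_add]; push_cast; ring_nf

lemma ee_int (m : ℤ) : ee m = 1 := by
  rw [ee]
  have := Complex.exp_int_mul_two_pi_mul_I m
  rw [← this]; push_cast; ring_nf

lemma norm_ee (ξ : ℝ) : ‖ee ξ‖ = 1 := by
  rw [ee, Complex.norm_exp]
  norm_num [Complex.mul_re]

-- sum over Ioc 0 N equals range sum
lemma sum_Ioc_int (G : ℤ → ℂ) (N : ℕ) :
    ∑ k ∈ Finset.Ioc (0:ℤ) (N:ℤ), G k = ∑ i ∈ Finset.range N, G (i+1) := by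
  induction N with
  | zero => simp
  | succ N ih =>
    have h1 : ((N:ℤ)+1) = ((N+1:ℕ):ℤ) := by push_cast; ring
    have : Finset.Ioc (0:ℤ) ((N+1:ℕ):ℤ) = insert ((N:ℤ)+1) (Finset.Ioc (0:ℤ) (N:ℤ)) := by
      ext k; simp; omega
    rw [this, Finset.sum_insert (by simp), ih, Finset.sum_range_succ]
    push_cast
    simp [add_comm]

section QP
variable {g : ℤ → ℂ} {w : ℂ} {q : ℤ}

lemma qp_shift (hper : ∀ k, g (k + q) = w * g k) (a b : ℤ) :
    ∑ k ∈ Finset.Ioc (a+q) (b+q), g k = w * ∑ k ∈ Finset.Ioc a b, g k := by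
  rw [← Finset.map_add_right_Ioc, Finset.sum_map, Finset.mul_sum]
  simp only [addRightEmbedding_apply]
  exact Finset.sum_congr rfl fun k _ => hper k

lemma qp_block (hper : ∀ k, g (k + q) = w * g k) (j : ℕ) :
    ∑ k ∈ Finset.Ioc (q*j) (q*j+q), g k = w^j * ∑ k ∈ Finset.Ioc (0:ℤ) q, g k := by
  induction j with
  | zero => simp
  | succ j ih =>
    have h1 : (q*(j+1:ℕ) : ℤ) = q*j + q := by push_cast; ring
    rw [h1, qp_shift hper, ih, pow_succ]; ring

lemma qp_geom (hq : 1 ≤ q) (hper : ∀ k, g (k + q) = w * g k) (j : ℕ) :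
    ∑ k ∈ Finset.Ioc (0:ℤ) (q*j), g k
      = (∑ i ∈ Finset.range j, w^i) * ∑ k ∈ Finset.Ioc (0:ℤ) q, g k := by
  induction j with
  | zero => simp
  | succ j ih =>
    have h0 : (0:ℤ) ≤ q*j := by positivity
    have h1 : (q*j : ℤ) ≤ q*(j+1:ℕ) := by push_cast; nlinarith
    have h2 : (q*(j+1:ℕ) : ℤ) = q*j + q := by push_cast; ring
    rw [← Finset.Ioc_union_Ioc_eq_Ioc h0 h1, Finset.sum_union (by
      simp [Finset.disjoint_left]; omega), ih, h2, qp_block hper, Finset.sum_range_succ]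
    ring

lemma qp_bounded (hq : 1 ≤ q) (hper : ∀ k, g (k + q) = w * g k)
    {c : ℝ} (hc : 0 ≤ c) (hgc : ∀ k, ‖g k‖ ≤ c) {D : ℝ}
    (hD : ∀ j : ℕ, ‖(∑ i ∈ Finset.range j, w^i) * ∑ k ∈ Finset.Ioc (0:ℤ) q, g k‖ ≤ D) :
    ∀ N : ℕ, ‖∑ k ∈ Finset.Ioc (0:ℤ) (N:ℤ), g k‖ ≤ D + c * q := by
  intro N
  set j : ℤ := (N : ℤ) / q with hj
  have hq0 : (0:ℤ) < q := hq
  have hdm := Int.mul_ediv_add_emod (N:ℤ) q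
  have hr0 := Int.emod_nonneg (N:ℤ) (ne_of_gt hq0)
  have hrq := Int.emod_lt_of_pos (N:ℤ) hq0
  have hj0 : 0 ≤ j := Int.ediv_nonneg (by positivity) (le_of_lt hq0)
  have hqj : q * j ≤ (N:ℤ) := by simp only [hj]; omega
  have hsplit : ∑ k ∈ Finset.Ioc (0:ℤ) (N:ℤ), g k
      = ∑ k ∈ Finset.Ioc (0:ℤ) (q*j), g k + ∑ k ∈ Finset.Ioc (q*j) (N:ℤ), g k := by
    rw [← Finset.sum_union (by simp [Finset.disjoint_left]; omega),
      Finset.Ioc_union_Ioc_eq_Ioc (by positivity) hqj]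
  have hjn : q * ((j.toNat : ℤ)) = q * j := by rw [Int.toNat_of_nonneg hj0]
  have h1 : ‖∑ k ∈ Finset.Ioc (0:ℤ) (q*j), g k‖ ≤ D := by
    rw [← hjn, qp_geom hq hper j.toNat]; exact hD _
  have h2 : ‖∑ k ∈ Finset.Ioc (q*j) (N:ℤ), g k‖ ≤ c * q := by
    calc ‖∑ k ∈ Finset.Ioc (q*j) (N:ℤ), g k‖ ≤ ∑ k ∈ Finset.Ioc (q*j) (N:ℤ), c :=
          norm_sum_le_of_le _ (fun k _ => hgc k)
      _ = ((N:ℤ) - q*j).toNat * c := by rw [Finset.sum_const, Int.card_Ioc]; simp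
      _ ≤ c * q := by
          have : (((N:ℤ) - q*j).toNat : ℝ) ≤ (q:ℝ) := by
            have h3 : ((N:ℤ) - q*j).toNat ≤ q.toNat := by simp only [hj]; omega
            calc (((N:ℤ) - q*j).toNat : ℝ) ≤ (q.toNat : ℝ) := by exact_mod_cast h3
              _ = (q:ℝ) := by
                have h4 : (q.toNat : ℤ) = q := Int.toNat_of_nonneg (le_of_lt hq0)
                exact_mod_cast congrArg (fun z : ℤ => (z : ℝ)) h4
          nlinarith
  calc ‖∑ k ∈ Finset.Ioc (0:ℤ) (N:ℤ), g k‖ ≤ _ := hsplit ▸ norm_add_le _ _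
    _ ≤ D + c * q := add_le_add h1 h2
end QP

/-- for rational `t = u/q` the limit of the symmetric partial sums
`S_K(t,x)` exists for every real `x`. -/
theorem stmt7 (n : ℕ) (hn : 2 ≤ n) (u q : ℤ) (hq : 1 ≤ q) (x : ℝ) :
    ∃ L : ℂ, Tendsto (fun K : ℕ => SK n ((u : ℝ) / (q : ℝ)) x K) atTop (nhds L) := by
  have hq0 : (0:ℤ) < q := hq
  have hqR : (q:ℝ) ≠ 0 := by exact_mod_cast hq0.ne'
  set t : ℝ := (u:ℝ)/(q:ℝ) with ht
  set f : ℤ → ℂ := fun k => ee (t * (k:ℝ)^n + x * (k:ℝ)) with hf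
  set w : ℂ := ee (x * q) with hw
  have hwn : ‖w‖ = 1 := norm_ee _
  have hw0 : w ≠ 0 := by intro h; rw [h] at hwn; simp at hwn
  have hfn : ∀ k, ‖f k‖ = 1 := fun k => norm_ee _
  -- quasiperiodicity of f
  have hper : ∀ k : ℤ, f (k + q) = w * f k := by
    intro k
    obtain ⟨s, hs⟩ : (q:ℤ) ∣ (k+q)^n - k^n := by
      have h1 : (k:ℤ) ≡ k + q [ZMOD q] := Int.modEq_iff_dvd.mpr ⟨1, by ring⟩
      exact (h1.pow n).dvd
    have hsR : ((k:ℝ)+q)^n = (k:ℝ)^n + q*s := by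
      have := congrArg (fun z : ℤ => (z:ℝ)) hs
      push_cast at this ⊢
      linarith
    have harg : t * ((k+q:ℤ):ℝ)^n + x * ((k+q:ℤ):ℝ)
        = (t * (k:ℝ)^n + x*(k:ℝ)) + (((u*s:ℤ):ℝ) + x*q) := by
      push_cast
      rw [hsR, ht]
      field_simp
      ring
    show ee _ = w * ee _
    rw [harg, ee_add (t * (k:ℝ)^n + x*(k:ℝ)), ee_add ((u*s:ℤ):ℝ) (x*q), ee_int]
    show _ = ee (x * (q:ℝ)) * _
    ring
  have hper' : ∀ k : ℤ, f (-(k + q)) = w⁻¹ * f (-k) := by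
    intro k
    have := hper (-(k+q))
    have h2 : (-(k+q)) + q = -k := by ring
    rw [h2] at this
    rw [this]
    field_simp
  -- bounded partial sums of m k = f k - f (-k)
  set m : ℤ → ℂ := fun k => f k - f (-k) with hm
  have key : ∃ C : ℝ, 0 ≤ C ∧ ∀ N : ℕ, ‖∑ k ∈ Finset.Ioc (0:ℤ) (N:ℤ), m k‖ ≤ C := by
    by_cases hw1 : w = 1
    · -- periodic case, block sum of m vanishes
      have hperf : ∀ k : ℤ, f (k + q) = f k := by intro k; rw [hper k, hw1, one_mul]
      have hperm : ∀ k : ℤ, m (k + q) = (1:ℂ) * m k := by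
        intro k; simp only [hm, one_mul]
        rw [hperf k, hper' k, hw1]
        simp
      have hblock : ∑ k ∈ Finset.Ioc (0:ℤ) q, m k = 0 := by
        have e1 : ∑ k ∈ Finset.Ioc (0:ℤ) q, f (-k) = ∑ k ∈ Finset.Ico (0:ℤ) q, f k := by
          refine Finset.sum_nbij' (fun k => q - k) (fun k => q - k) ?_ ?_ ?_ ?_ ?_
          · intro a ha; simp at ha ⊢; omega
          · intro a ha; simp at ha ⊢; omega
          · intro a _; ring
          · intro a _; ring
          · intro a _
            have : f (q - a) = f ((-a) + q) := by ring_nf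
            rw [this, hperf]
        have e2 : ∑ k ∈ Finset.Ico (0:ℤ) q, f k = ∑ k ∈ Finset.Ioc (0:ℤ) q, f k := by
          have hic : Finset.Ico (0:ℤ) q = insert 0 (Finset.Ioo (0:ℤ) q) := by
            ext k; simp; omega
          have hoc : Finset.Ioc (0:ℤ) q = insert q (Finset.Ioo (0:ℤ) q) := by
            ext k; simp; omega
          rw [hic, hoc, Finset.sum_insert (by simp), Finset.sum_insert (by simp)]
          congr 1
          have : f q = f (0 + q) := by norm_num
          rw [this, hperf]
        simp only [hm, Finset.sum_sub_distrib, e1, e2, sub_self]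
      refine ⟨0 + 2 * q, by positivity, ?_⟩
      refine qp_bounded hq hperm (by norm_num) ?_ ?_
      · intro k
        calc ‖f k - f (-k)‖ ≤ ‖f k‖ + ‖f (-k)‖ := norm_sub_le _ _
          _ ≤ 2 := by rw [hfn, hfn]; norm_num
      · intro j; rw [hblock, mul_zero, norm_zero]
    · -- w ≠ 1 : geometric bounds for f and f∘neg separately
      have hgeom : ∀ (v : ℂ), ‖v‖ = 1 → v ≠ 1 → ∀ j : ℕ,
          ‖∑ i ∈ Finset.range j, v^i‖ ≤ 2 / ‖v - 1‖ := by
        intro v hv hv1 j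
        rw [geom_sum_eq hv1]
        rw [norm_div]
        have hpos : 0 < ‖v - 1‖ := by
          rw [norm_pos_iff]; intro h; apply hv1; rwa [sub_eq_zero] at h
        rw [div_le_div_iff₀ hpos hpos]
        have : ‖v^j - 1‖ ≤ 2 := by
          calc ‖v^j - 1‖ ≤ ‖v^j‖ + ‖(1:ℂ)‖ := norm_sub_le _ _
            _ = 2 := by rw [norm_pow, hv]; norm_num
        nlinarith
      have hIocq : ∀ g : ℤ → ℂ, (∀ k, ‖g k‖ ≤ 1) →
          ‖∑ k ∈ Finset.Ioc (0:ℤ) q, g k‖ ≤ (q:ℝ) := by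
        intro g hg
        calc ‖∑ k ∈ Finset.Ioc (0:ℤ) q, g k‖ ≤ ∑ k ∈ Finset.Ioc (0:ℤ) q, (1:ℝ) :=
            norm_sum_le_of_le _ (fun k _ => hg k)
          _ = ((q:ℤ).toNat : ℝ) := by rw [Finset.sum_const, Int.card_Ioc]; simp
          _ ≤ (q:ℝ) := by
            have h4 : ((q.toNat:ℤ)) = q := Int.toNat_of_nonneg hq0.le
            exact le_of_eq (by exact_mod_cast congrArg (fun z : ℤ => (z:ℝ)) h4)
      have hbf : ∀ N : ℕ, ‖∑ k ∈ Finset.Ioc (0:ℤ) (N:ℤ), f k‖ ≤ 2/‖w-1‖ * q + 1 * q := by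
        refine qp_bounded hq hper (by norm_num) (fun k => (hfn k).le) ?_
        intro j
        rw [norm_mul]
        have h1 := hgeom w hwn hw1 j
        have h2 := hIocq f (fun k => (hfn k).le)
        have := norm_nonneg (∑ i ∈ Finset.range j, w^i)
        have := norm_nonneg (∑ k ∈ Finset.Ioc (0:ℤ) q, f k)
        have hq1 : (1:ℝ) ≤ (q:ℝ) := by exact_mod_cast hq
        nlinarith
      have hwi1 : w⁻¹ ≠ 1 := by
        intro h; apply hw1; rw [← inv_inv w, h, inv_one]
      have hwin : ‖w⁻¹‖ = 1 := by rw [norm_inv, hwn]; norm_num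
      set g : ℤ → ℂ := fun k => f (-k) with hg
      have hperg : ∀ k : ℤ, g (k + q) = w⁻¹ * g k := fun k => hper' k
      have hgn : ∀ k, ‖g k‖ = 1 := fun k => hfn _
      have hbg : ∀ N : ℕ, ‖∑ k ∈ Finset.Ioc (0:ℤ) (N:ℤ), g k‖ ≤ 2/‖w⁻¹-1‖ * q + 1 * q := by
        refine qp_bounded hq hperg (by norm_num) (fun k => (hgn k).le) ?_
        intro j
        rw [norm_mul]
        have h1 := hgeom w⁻¹ hwin hwi1 j
        have h2 := hIocq g (fun k => (hgn k).le)
        have := norm_nonneg (∑ i ∈ Finset.range j, (w⁻¹)^i)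
        have := norm_nonneg (∑ k ∈ Finset.Ioc (0:ℤ) q, g k)
        have hq1 : (1:ℝ) ≤ (q:ℝ) := by exact_mod_cast hq
        nlinarith
      refine ⟨(2/‖w-1‖ * q + 1 * q) + (2/‖w⁻¹-1‖ * q + 1 * q), ?_, ?_⟩
      · have hq1 : (0:ℝ) ≤ (q:ℝ) := by positivity
        have : (0:ℝ) ≤ 2/‖w-1‖ := by positivity
        have : (0:ℝ) ≤ 2/‖w⁻¹-1‖ := by positivity
        nlinarith
      · intro N
        have : ∑ k ∈ Finset.Ioc (0:ℤ) (N:ℤ), m k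
            = ∑ k ∈ Finset.Ioc (0:ℤ) (N:ℤ), f k - ∑ k ∈ Finset.Ioc (0:ℤ) (N:ℤ), g k := by
          simp [hm, hg, Finset.sum_sub_distrib]
        rw [this]
        calc ‖_ - _‖ ≤ _ := norm_sub_le _ _
          _ ≤ _ := add_le_add (hbf N) (hbg N)
  obtain ⟨C, hC0, hC⟩ := key
  set Hn : ℕ → ℂ := fun N => ∑ i ∈ Finset.range N, m ((i:ℤ)+1) with hHndef
  have hHn : ∀ N, ‖Hn N‖ ≤ C := by
    intro N
    have := sum_Ioc_int m N
    rw [hHndef]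
    simp only []
    rw [← this]
    exact hC N
  set TT : ℕ → ℂ := fun K => ∑ i ∈ Finset.range K,
    (1/((i:ℂ)+1)) • m ((i:ℤ)+1) with hTT
  -- SK equals TT
  have hSK : ∀ K : ℕ, SK n t x K = TT K := by
    intro K
    rw [SK]
    have hsplit : (Finset.Icc (-(K:ℤ)) (K:ℤ)).filter (· ≠ 0)
        = Finset.Ico (-(K:ℤ)) 0 ∪ Finset.Ioc 0 (K:ℤ) := by
      ext k; simp; omega
    rw [hsplit, Finset.sum_union (by simp [Finset.disjoint_left]; omega)]
    have hneg : ∑ k ∈ Finset.Ico (-(K:ℤ)) 0, ee (t*(k:ℝ)^n + x*(k:ℝ))/(k:ℂ)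
        = ∑ k ∈ Finset.Ioc (0:ℤ) (K:ℤ), (-(f (-k) / (k:ℂ))) := by
      refine Finset.sum_nbij' (fun k => -k) (fun k => -k) ?_ ?_ ?_ ?_ ?_
      · intro a ha; simp at ha ⊢; omega
      · intro a ha; simp at ha ⊢; omega
      · intro a _; ring
      · intro a _; ring
      · intro a _
        show ee (t*(a:ℝ)^n + x*(a:ℝ))/(a:ℂ) = -(f (-(-a)) / (((-a):ℤ):ℂ))
        rw [neg_neg]
        simp only [hf]
        push_cast
        ring
    rw [hneg, ← Finset.sum_add_distrib]
    have : ∀ k ∈ Finset.Ioc (0:ℤ) (K:ℤ),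
        (-(f (-k) / (k:ℂ)) + ee (t*(k:ℝ)^n + x*(k:ℝ))/(k:ℂ)) = m k / (k:ℂ) := by
      intro k _
      simp only [hm, hf]
      ring
    rw [Finset.sum_congr rfl this, sum_Ioc_int (fun k => m k / (k:ℂ)) K, hTT]
    refine Finset.sum_congr rfl ?_
    intro i _
    rw [smul_eq_mul]
    push_cast
    ring
  -- Abel summation
  set a : ℕ → ℂ := fun i => (1/((i:ℂ)+2) - 1/((i:ℂ)+1)) • Hn (i+1) with ha
  have habel : ∀ K : ℕ, TT K = (1/(((K-1:ℕ):ℂ)+1)) • Hn K - ∑ i ∈ Finset.range (K-1), a i := by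
    intro K
    show ∑ i ∈ Finset.range K, (1/((i:ℂ)+1)) • m ((i:ℤ)+1) = _
    rw [Finset.sum_range_by_parts (fun i => 1/((i:ℂ)+1)) (fun i => m ((i:ℤ)+1)) K]
    congr 1
    refine Finset.sum_congr rfl ?_
    intro i _
    rw [ha]
    congr 1
    push_cast
    ring
  -- summability of a
  have hasum : Summable a := by
    have base : Summable (fun i : ℕ => 1/((i:ℝ)+1)^2) := by
      have b0 : Summable (fun n : ℕ => 1/(n:ℝ)^2) := Real.summable_one_div_nat_pow.mpr one_lt_two
      have := (summable_nat_add_iff 1).mpr b0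
      refine this.congr ?_
      intro i; push_cast; ring
    refine Summable.of_norm_bounded (base.mul_left C) ?_
    intro i
    rw [ha]
    simp only [smul_eq_mul, norm_mul]
    have hr : (1/((i:ℂ)+2) - 1/((i:ℂ)+1)) = (((1/((i:ℝ)+2) - 1/((i:ℝ)+1)) : ℝ) : ℂ) := by
      push_cast; ring
    have hi1 : (0:ℝ) < (i:ℝ)+1 := by positivity
    have hi2 : (0:ℝ) < (i:ℝ)+2 := by positivity
    have hval : (1/((i:ℝ)+2) - 1/((i:ℝ)+1)) = -(1/(((i:ℝ)+1)*((i:ℝ)+2))) := by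
      field_simp
      ring
    have hnorm1 : ‖(1/((i:ℂ)+2) - 1/((i:ℂ)+1))‖ = 1/(((i:ℝ)+1)*((i:ℝ)+2)) := by
      rw [hr, Complex.norm_real, hval, norm_neg, Real.norm_of_nonneg (by positivity)]
    rw [hnorm1]
    have hle : 1/(((i:ℝ)+1)*((i:ℝ)+2)) ≤ 1/((i:ℝ)+1)^2 := by
      apply one_div_le_one_div_of_le (by positivity)
      nlinarith
    have := hHn (i+1)
    have h0 : (0:ℝ) ≤ 1/(((i:ℝ)+1)*((i:ℝ)+2)) := by positivity
    calc 1/(((i:ℝ)+1)*((i:ℝ)+2)) * ‖Hn (i+1)‖ ≤ 1/(((i:ℝ)+1)*((i:ℝ)+2)) * C :=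
        mul_le_mul_of_nonneg_left (hHn (i+1)) h0
      _ = C * (1/(((i:ℝ)+1)*((i:ℝ)+2))) := mul_comm _ _
      _ ≤ C * (1/((i:ℝ)+1)^2) := mul_le_mul_of_nonneg_left hle hC0
  -- limits
  have h1 : Tendsto (fun K : ℕ => (1/(((K-1:ℕ):ℂ)+1)) • Hn K) atTop (nhds 0) := by
    apply squeeze_zero_norm' (a := fun K : ℕ => C / (K:ℝ))
    · filter_upwards [eventually_ge_atTop 1] with K hK
      have hcast : (((K-1:ℕ)):ℂ)+1 = (K:ℂ) := by
        have : (K-1)+1 = K := Nat.sub_add_cancel hK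
        rw [← this]
        push_cast
        ring
      rw [smul_eq_mul, norm_mul, hcast]
      have hKpos : (0:ℝ) < (K:ℝ) := by exact_mod_cast hK
      have : ‖1/((K:ℕ):ℂ)‖ = 1/(K:ℝ) := by
        rw [norm_div, norm_one, Complex.norm_natCast]
      rw [this]
      calc 1/(K:ℝ) * ‖Hn K‖ ≤ 1/(K:ℝ) * C :=
          mul_le_mul_of_nonneg_left (hHn K) (by positivity)
        _ = C / (K:ℝ) := by ring
    · exact tendsto_const_div_atTop_nhds_zero_nat C
  have h2 : Tendsto (fun K : ℕ => ∑ i ∈ Finset.range (K-1), a i) atTop (nhds (∑' i, a i)) :=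
    (hasum.hasSum.tendsto_sum_nat).comp (tendsto_sub_atTop_nat 1)
  refine ⟨0 - ∑' i, a i, ?_⟩
  have h3 : Tendsto (fun K : ℕ => (1/(((K-1:ℕ):ℂ)+1)) • Hn K - ∑ i ∈ Finset.range (K-1), a i)
      atTop (nhds (0 - ∑' i, a i)) := h1.sub h2
  refine h3.congr ?_
  intro K
  rw [hSK K, habel K]
end
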